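/- Let V' be a finite set, E' ⊆ V' × V' a set of directed edges, w' : E' → ℤ a weight function with w'(e) ≥ −W for all e ∈ E' and some W ∈ ℕ, and u ∈ V' a node. Suppose every cycle reachable from u has nonnegative total weight, i.e., every finite walk v0 v1 ⋯ vk with k ≥ 1, (v_i, v_{i+1}) ∈ E' for all i < k, v_k = v0, and v0 reachable from u by an E'-walk, satisfies Σ_{i<k} w'(v_i, v_{i+1}) ≥ 0. Then every finite walk starting at u has total weight at least −2·|V'|·W. -/

import Mathlib

/-- in a finite weighted directed graph with weights bounded below by `-W`,
if every cycle reachable from `u` has nonnegative total weight, then every finite walk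
starting at `u` has total weight at least `-2·|V'|·W`. -/
theorem statement12 {V' : Type*} [Fintype V']
    (E' : Set (V' × V')) (w' : V' × V' → ℤ) (W : ℕ)
    (hw : ∀ e ∈ E', -(W : ℤ) ≤ w' e) (u : V')
    (hcyc : ∀ (f : ℕ → V') (k : ℕ), 1 ≤ k →
      (∀ i < k, (f i, f (i + 1)) ∈ E') → f k = f 0 →
      (∃ (g : ℕ → V') (m : ℕ), g 0 = u ∧ (∀ i < m, (g i, g (i + 1)) ∈ E') ∧ g m = f 0) →
      0 ≤ ∑ i ∈ Finset.range k, w' (f i, f (i + 1))) :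
    ∀ (f : ℕ → V') (k : ℕ), f 0 = u → (∀ i < k, (f i, f (i + 1)) ∈ E') →
      -((2 * Fintype.card V' * W : ℕ) : ℤ) ≤ ∑ i ∈ Finset.range k, w' (f i, f (i + 1)) := by
  intro f k
  induction k using Nat.strong_induction_on generalizing f with
  | _ k ih =>
  intro hf0 hedge
  by_cases hk : k < Fintype.card V'
  · -- short walk: bound each edge by -W
    have hsum : -((k : ℤ) * W) ≤ ∑ i ∈ Finset.range k, w' (f i, f (i + 1)) := by
      calc -((k : ℤ) * W) = ∑ _i ∈ Finset.range k, -(W : ℤ) := by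
            simp [mul_comm]
        _ ≤ _ := Finset.sum_le_sum fun i hi =>
            hw _ (hedge i (Finset.mem_range.mp hi))
    have hW : (0 : ℤ) ≤ W := by positivity
    have hkc : (k : ℤ) ≤ Fintype.card V' := by exact_mod_cast hk.le
    push_cast
    nlinarith [hsum]
  · -- long walk: pigeonhole gives a repeated vertex
    push_neg at hk
    obtain ⟨a, ha, b, hb, hab, hfab⟩ :=
      Finset.exists_ne_map_eq_of_card_lt_of_maps_to
        (s := Finset.range (k + 1)) (t := (Finset.univ : Finset V'))
        (by simpa using Nat.lt_succ_of_le hk) (fun a _ => Finset.mem_univ (f a))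
    simp only [Finset.mem_range] at ha hb
    -- wlog i < j
    obtain ⟨i, j, hij, hjk, hfij⟩ : ∃ i j, i < j ∧ j ≤ k ∧ f i = f j := by
      rcases hab.lt_or_gt with h | h
      · exact ⟨a, b, h, by omega, hfab⟩
      · exact ⟨b, a, h, by omega, hfab.symm⟩
    set d := j - i with hd
    have hjd : j = i + d := by omega
    have hd1 : 1 ≤ d := by omega
    have hcard : 1 ≤ Fintype.card V' := Fintype.card_pos_iff.mpr ⟨u⟩
    -- the cycle f i, f (i+1), ..., f j has nonnegative weight
    have hcycle : 0 ≤ ∑ t ∈ Finset.range d, w' (f (i + t), f (i + t + 1)) := by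
      refine hcyc (fun t => f (i + t)) d hd1 (fun t ht => ?_) ?_ ⟨f, i, hf0, fun t ht => hedge t (by omega), rfl⟩
      · exact hedge (i + t) (by omega)
      · show f (i + d) = f (i + 0)
        rw [show i + d = j from by omega]
        exact hfij.symm
    -- the shortened walk
    set g : ℕ → V' := fun t => if t < i then f t else f (t + d) with hg
    have hgval1 : ∀ t, t < i → g t = f t := fun t ht => if_pos ht
    have hgval2 : ∀ t, i ≤ t → g t = f (t + d) := fun t ht => if_neg (by omega)
    have hg0 : g 0 = u := by
      rcases Nat.eq_zero_or_pos i with h0 | h0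
      · calc g 0 = f j := by rw [hgval2 0 (by omega)]; congr 1; omega
          _ = f i := hfij.symm
          _ = u := by rw [h0, hf0]
      · rw [hgval1 0 h0]; exact hf0
    have hgedge : ∀ t < k - d, (g t, g (t + 1)) ∈ E' := by
      intro t ht
      rcases lt_trichotomy (t + 1) i with h | h | h
      · rw [hgval1 t (by omega), hgval1 (t + 1) h]
        exact hedge t (by omega)
      · rw [hgval1 t (by omega), hgval2 (t + 1) (by omega)]
        rw [show t + 1 + d = j from by omega, ← hfij, ← h]
        exact hedge t (by omega)
      · rw [hgval2 t (by omega), hgval2 (t + 1) (by omega)]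
        have : (f (t + d), f (t + d + 1)) ∈ E' := hedge (t + d) (by omega)
        convert this using 3 <;> omega
    -- sum decomposition
    have hsplit : ∑ t ∈ Finset.range k, w' (f t, f (t + 1))
        = (∑ t ∈ Finset.range i, w' (f t, f (t + 1))
            + ∑ t ∈ Finset.Ico i j, w' (f t, f (t + 1)))
          + ∑ t ∈ Finset.Ico j k, w' (f t, f (t + 1)) := by
      rw [Finset.range_eq_Ico,
        ← Finset.sum_Ico_consecutive _ (Nat.zero_le j) hjk,
        ← Finset.sum_Ico_consecutive _ (Nat.zero_le i) hij.le,
        ← Finset.range_eq_Ico]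
    have hcyc' : ∑ t ∈ Finset.Ico i j, w' (f t, f (t + 1))
        = ∑ t ∈ Finset.range d, w' (f (i + t), f (i + t + 1)) := by
      rw [Finset.sum_Ico_eq_sum_range]
    have hgsum : ∑ t ∈ Finset.range (k - d), w' (g t, g (t + 1))
        = ∑ t ∈ Finset.range i, w' (f t, f (t + 1))
          + ∑ t ∈ Finset.Ico j k, w' (f t, f (t + 1)) := by
      rw [Finset.range_eq_Ico,
        ← Finset.sum_Ico_consecutive _ (Nat.zero_le i) (show i ≤ k - d by omega)]
      congr 1
      · refine Finset.sum_congr (by rw [Finset.range_eq_Ico]) fun t ht => ?_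
        have ht : t < i := Finset.mem_range.mp ht
        rcases lt_or_eq_of_le (Nat.succ_le_of_lt ht) with h | h
        · rw [hgval1 t ht, hgval1 (t + 1) h]
        · rw [hgval1 t ht, hgval2 (t + 1) (by omega),
            show t + 1 + d = j from by omega, ← hfij, show i = t + 1 from by omega]
      · rw [Finset.sum_Ico_eq_sum_range, Finset.sum_Ico_eq_sum_range]
        refine Finset.sum_congr (by congr 1; omega) fun t _ => ?_
        rw [hgval2 (i + t) (by omega), hgval2 (i + t + 1) (by omega)]
        congr 3 <;> omega
    have hih := ih (k - d) (by omega) g hg0 hgedge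
    rw [hsplit, hcyc']
    rw [hgsum] at hih
    linarith
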